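/- Let n ≥ 1 and let Ω be an invertible 2n × 2n complex matrix with Ωᵀ = −Ω. Let A be the (1 + 2n) × (1 + 2n) complex block matrix A = fromBlocks 0 0 0 Ω, i.e., A has a 1×1 zero block in the upper-left corner, zero off-diagonal blocks, and Ω in the lower-right 2n × 2n block. Then an invertible (1 + 2n) × (1 + 2n) complex matrix g satisfies gᵀ · A · g = A if and only if g = fromBlocks λ ℓ 0 S for some nonzero scalar λ ∈ ℂ (a 1×1 block), some 1 × 2n row vector ℓ, and some 2n × 2n matrix S with Sᵀ · Ω · S = Ω. (For Ω the standard rank-2n symplectic form on ℂ^{2n+1}, this identifies the odd symplectic group Sp(2n+1) = {g ∈ GL(2n+1, ℂ) : ω(gu, gv) = ω(u, v)} with the group of block upper-triangular matrices (λ, ℓ; 0, S) with λ ∈ ℂ*, ℓ ∈ ℂ^{2n}, S ∈ Sp(2n), giving its Levi decomposition Sp(2n+1) ≅ (ℂ* × Sp(2n)) ⋉ ℂ^{2n}.) -/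
import Mathlib


open Matrix

/-- Let `Ω` be an invertible skew-symmetric `2n × 2n` complex matrix and let
`A = fromBlocks 0 0 0 Ω`.  An invertible `(1 + 2n) × (1 + 2n)` complex matrix `g`
satisfies `gᵀ·A·g = A` if and only if `g = fromBlocks λ ℓ 0 S` for some nonzero
scalar `λ`, some row vector `ℓ` and some matrix `S` with `Sᵀ·Ω·S = Ω`.  This is the
description of the odd symplectic group `Sp(2n+1)` giving its Levi decomposition
`Sp(2n+1) ≅ (ℂ* × Sp(2n)) ⋉ ℂ^{2n}`. -/
theorem odd_symplectic_group_block_form (n : ℕ) (hn : 1 ≤ n)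
    (Ω : Matrix (Fin (2 * n)) (Fin (2 * n)) ℂ) (hΩ : IsUnit Ω) (hskew : Ωᵀ = -Ω)
    (g : Matrix (Fin 1 ⊕ Fin (2 * n)) (Fin 1 ⊕ Fin (2 * n)) ℂ) (hg : IsUnit g) :
    gᵀ * Matrix.fromBlocks 0 0 0 Ω * g = Matrix.fromBlocks 0 0 0 Ω ↔
      ∃ (lam : ℂ) (ℓ : Matrix (Fin 1) (Fin (2 * n)) ℂ)
        (S : Matrix (Fin (2 * n)) (Fin (2 * n)) ℂ),
        lam ≠ 0 ∧ Sᵀ * Ω * S = Ω ∧ g = Matrix.fromBlocks !![lam] ℓ 0 S := by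
  have hΩdet : Ω.det ≠ 0 := by
    simpa [isUnit_iff_ne_zero] using hΩ.map (Matrix.detMonoidHom)
  constructor
  · intro h
    set a := g.toBlocks₁₁ with ha
    set b := g.toBlocks₁₂ with hb
    set c := g.toBlocks₂₁ with hc
    set d := g.toBlocks₂₂ with hd
    have hg' : g = fromBlocks a b c d := (fromBlocks_toBlocks g).symm
    rw [hg', fromBlocks_transpose, fromBlocks_multiply, fromBlocks_multiply] at h
    simp only [Matrix.mul_zero, Matrix.zero_mul, add_zero, zero_add] at h
    rw [fromBlocks_inj] at h
    obtain ⟨h11, h12, h21, h22⟩ := h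
    -- d is invertible
    have hddet : d.det ≠ 0 := by
      have := congrArg Matrix.det h22
      simp only [Matrix.det_mul, Matrix.det_transpose] at this
      intro h0
      rw [h0] at this
      simp at this
      exact hΩdet this.symm
    have hdu : IsUnit (dᵀ * Ω).det := by
      rw [Matrix.det_mul, Matrix.det_transpose, isUnit_iff_ne_zero]
      exact mul_ne_zero hddet hΩdet
    -- c = 0
    have hc0 : c = 0 := by
      have h' : (dᵀ * Ω)⁻¹ * (dᵀ * Ω * c) = (dᵀ * Ω)⁻¹ * (0 : Matrix (Fin (2*n)) (Fin 1) ℂ) := congrArg _ h21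
      rwa [← Matrix.mul_assoc, Matrix.nonsing_inv_mul _ hdu, Matrix.one_mul,
        Matrix.mul_zero] at h'
    have ha' : a = !![a 0 0] := by
      ext i j
      fin_cases i; fin_cases j; simp
    refine ⟨a 0 0, b, d, ?_, h22, by rw [hg', hc0, ← ha']⟩
    -- lam ≠ 0
    have hgdet : g.det ≠ 0 := by
      simpa [isUnit_iff_ne_zero] using hg.map (Matrix.detMonoidHom)
    rw [hg', hc0, Matrix.det_fromBlocks_zero₂₁] at hgdet
    intro h0
    apply hgdet
    rw [ha', h0]
    simp
  · rintro ⟨lam, ℓ, S, hlam, hS, rfl⟩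
    rw [fromBlocks_transpose, fromBlocks_multiply, fromBlocks_multiply]
    simp [hS, Matrix.mul_assoc]
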